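/- Let G be a finite simple graph, let d ≥ 1 be an integer, and let C be a clique of G with at least 2d+1 vertices. Then C is monochromatic, i.e., for every d-cut (A, B) of G, either C ⊆ A or C ⊆ B. -/
import Mathlib


variable {V : Type*}

/-- A `d`-cut of a simple graph `G`: a partition `(A, B)` of the vertex set into two
nonempty parts such that every vertex of `A` has at most `d` neighbors in `B` and
every vertex of `B` has at most `d` neighbors in `A`. -/
def IsDCut (G : SimpleGraph V) (d : ℕ) (A B : Set V) : Prop :=
  A.Nonempty ∧ B.Nonempty ∧ Disjoint A B ∧ A ∪ B = Set.univ ∧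
    (∀ v ∈ A, (G.neighborSet v ∩ B).ncard ≤ d) ∧
    (∀ v ∈ B, (G.neighborSet v ∩ A).ncard ≤ d)

/-- A vertex set `T` is monochromatic if every `d`-cut of `G` has `T` entirely on one side. -/
def Monochromatic (G : SimpleGraph V) (d : ℕ) (T : Set V) : Prop :=
  ∀ A B : Set V, IsDCut G d A B → T ⊆ A ∨ T ⊆ B

/-- The edge cut of a cut `(A, B)`: the set of edges of `G` with one endpoint in `A`
and the other endpoint in `B`. -/
def edgeCut (G : SimpleGraph V) (A B : Set V) : Set (Sym2 V) :=
  {e | e ∈ G.edgeSet ∧ ∃ u v, e = s(u, v) ∧ u ∈ A ∧ v ∈ B}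

/-- A minimal `d`-cut: no `d`-cut has an edge cut that is a proper subset of its edge cut. -/
def IsMinimalDCut (G : SimpleGraph V) (d : ℕ) (A B : Set V) : Prop :=
  IsDCut G d A B ∧ ∀ A' B' : Set V, IsDCut G d A' B' → ¬ edgeCut G A' B' ⊂ edgeCut G A B

/-- A maximal `d`-cut: no `d`-cut has an edge cut that properly contains its edge cut. -/
def IsMaximalDCut (G : SimpleGraph V) (d : ℕ) (A B : Set V) : Prop :=
  IsDCut G d A B ∧ ∀ A' B' : Set V, IsDCut G d A' B' → ¬ edgeCut G A B ⊂ edgeCut G A' B'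

/-- A clique with at least `2d+1` vertices is monochromatic. -/
theorem clique_monochromatic [Fintype V] (G : SimpleGraph V) (d : ℕ) (hd : 1 ≤ d)
    (C : Set V) (hC : G.IsClique C) (hsize : 2 * d + 1 ≤ C.ncard) :
    Monochromatic G d C := by
  rintro A B ⟨hA, hB, hdisj, huniv, hAB, hBA⟩
  by_contra h
  push_neg at h
  obtain ⟨hnA, hnB⟩ := h
  obtain ⟨u, huC, huA⟩ := Set.not_subset.mp hnA
  obtain ⟨v, hvC, hvB⟩ := Set.not_subset.mp hnB
  have huB : u ∈ B := by
    have := Set.eq_univ_iff_forall.mp huniv u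
    rcases this with h | h
    · exact absurd h huA
    · exact h
  have hvA : v ∈ A := by
    have := Set.eq_univ_iff_forall.mp huniv v
    rcases this with h | h
    · exact h
    · exact absurd h hvB
  have h1 : C ∩ A ⊆ G.neighborSet u ∩ A := by
    rintro w ⟨hwC, hwA⟩
    refine ⟨?_, hwA⟩
    have hne : u ≠ w := fun h => huA (h ▸ hwA)
    exact hC huC hwC hne
  have h2 : C ∩ B ⊆ G.neighborSet v ∩ B := by
    rintro w ⟨hwC, hwB⟩
    refine ⟨?_, hwB⟩
    have hne : v ≠ w := fun h => hvB (h ▸ hwB)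
    exact hC hvC hwC hne
  have c1 : (C ∩ A).ncard ≤ d :=
    le_trans (Set.ncard_le_ncard h1 (Set.toFinite _)) (hBA u huB)
  have c2 : (C ∩ B).ncard ≤ d :=
    le_trans (Set.ncard_le_ncard h2 (Set.toFinite _)) (hAB v hvA)
  have hCeq : C = (C ∩ A) ∪ (C ∩ B) := by
    ext w
    constructor
    · intro hw
      rcases Set.eq_univ_iff_forall.mp huniv w with h | h
      · exact Or.inl ⟨hw, h⟩
      · exact Or.inr ⟨hw, h⟩
    · rintro (⟨hw, _⟩ | ⟨hw, _⟩) <;> exact hw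
  have : C.ncard ≤ (C ∩ A).ncard + (C ∩ B).ncard := by
    conv_lhs => rw [hCeq]
    exact Set.ncard_union_le _ _
  omega
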